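/- Let V be a topological space and T a subset of V, endowed with the subspace topology, with inclusion map ι : T → V. The functor Opens(V) ⥤ Opens(T) sending an open subset U of V to U ∩ T (i.e., the functor Opens.map ι given by taking preimages under ι) exhibits Opens(T) as the localization of the category Opens(V) at the class of T-isomorphisms. -/

import Mathlib

/-!
STATEMENT 1: Let `V` be a topological space and `T ⊆ V` with the subspace topology, with
inclusion `ι : T → V`. The functor `Opens V ⥤ Opens T`, `U ↦ U ∩ T` (i.e. `Opens.map ι`,
taking preimages under `ι`) exhibits `Opens T` as the localization of `Opens V` at the
class of `T`-isomorphisms.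
-/

open CategoryTheory TopologicalSpace

universe u

/-- The class of `T`-isomorphisms in `Opens V`: an inclusion `V'' ⟶ V'` of open subsets of `V`
is a `T`-isomorphism if `V' ∩ T = V'' ∩ T`. -/
def TIso (V : Type u) [TopologicalSpace V] (T : Set V) : MorphismProperty (Opens V) :=
  fun V'' V' _ => (V' : Set V) ∩ T = (V'' : Set V) ∩ T

/-- The inclusion of the subspace `T` into `V`, as a morphism of `TopCat`. -/
def subspaceIncl (V : Type u) [TopologicalSpace V] (T : Set V) :
    TopCat.of T ⟶ TopCat.of V :=
  TopCat.ofHom ⟨Subtype.val, continuous_subtype_val⟩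

variable (V : Type u) [TopologicalSpace V] (T : Set V)

/-- The right adjoint of `Opens.map ι`. -/
def tExt : Opens (TopCat.of T) ⥤ Opens (TopCat.of V) where
  obj W := sSup {U : Opens (TopCat.of V) | (Opens.map (subspaceIncl V T)).obj U ≤ W}
  map {W W'} f := homOfLE (sSup_le_sSup (fun U hU => le_trans hU (leOfHom f)))

lemma map_tExt_obj (W : Opens (TopCat.of T)) :
    (Opens.map (subspaceIncl V T)).obj ((tExt V T).obj W) = W := by
  apply le_antisymm
  · intro x hx
    rw [Opens.mem_map] at hx
    simp only [tExt] at hx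
    rw [Opens.mem_sSup] at hx
    obtain ⟨U, hU, hxU⟩ := hx
    exact hU hxU
  · intro x hx
    obtain ⟨U, hUopen, hUeq⟩ := isOpen_induced_iff.mp W.2
    have hmem : (⟨U, hUopen⟩ : Opens (TopCat.of V)) ∈
        {U : Opens (TopCat.of V) | (Opens.map (subspaceIncl V T)).obj U ≤ W} := by
      intro y hy
      have : y ∈ (Subtype.val ⁻¹' U : Set T) := hy
      rw [hUeq] at this
      exact this
    rw [Opens.mem_map]
    simp only [tExt]
    rw [Opens.mem_sSup]
    refine ⟨⟨U, hUopen⟩, hmem, ?_⟩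
    show x ∈ (Subtype.val ⁻¹' U : Set T)
    rw [hUeq]
    exact hx

/-- The adjunction `Opens.map ι ⊣ tExt`. -/
def tAdj : Opens.map (subspaceIncl V T) ⊣ tExt V T :=
  Adjunction.mkOfHomEquiv
    { homEquiv := fun U W =>
        { toFun := fun f => homOfLE (le_sSup (leOfHom f))
          invFun := fun f => homOfLE (by
            have h := leOfHom f
            have : (Opens.map (subspaceIncl V T)).obj U ≤
                (Opens.map (subspaceIncl V T)).obj ((tExt V T).obj W) := fun x hx => h hx
            rwa [map_tExt_obj] at this)
          left_inv := fun _ => rfl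
          right_inv := fun _ => rfl } }

instance : (tExt V T).Full where
  map_surjective {W W'} f := by
    refine ⟨homOfLE ?_, rfl⟩
    have h := leOfHom f
    have : (Opens.map (subspaceIncl V T)).obj ((tExt V T).obj W) ≤
        (Opens.map (subspaceIncl V T)).obj ((tExt V T).obj W') := fun x hx => h hx
    rwa [map_tExt_obj, map_tExt_obj] at this

instance : (tExt V T).Faithful where
  map_injective := fun {_ _ _ _} _ => Subsingleton.elim _ _

lemma tIso_eq : TIso (TopCat.of V) T =
    (MorphismProperty.isomorphisms (Opens (TopCat.of T))).inverseImage
      (Opens.map (subspaceIncl V T)) := by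
  ext V'' V' f
  constructor
  · intro h
    have : (Opens.map (subspaceIncl V T)).obj V'' = (Opens.map (subspaceIncl V T)).obj V' := by
      apply Opens.ext
      show (Subtype.val ⁻¹' (V'' : Set (TopCat.of V)) : Set T) =
        Subtype.val ⁻¹' (V' : Set (TopCat.of V))
      have h' : (V' : Set (TopCat.of V)) ∩ T = (V'' : Set (TopCat.of V)) ∩ T := h
      rw [Subtype.preimage_coe_eq_preimage_coe_iff, Set.inter_comm T, Set.inter_comm T]
      exact h'.symm
    change IsIso _
    have heq : (Opens.map (subspaceIncl V T)).map f =
        eqToHom this := Subsingleton.elim _ _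
    rw [heq]; infer_instance
  · intro h
    have h' : IsIso ((Opens.map (subspaceIncl V T)).map f) := h
    have hle1 := leOfHom ((Opens.map (subspaceIncl V T)).map f)
    have hle2 := leOfHom (inv ((Opens.map (subspaceIncl V T)).map f))
    have heq : (Opens.map (subspaceIncl V T)).obj V'' = (Opens.map (subspaceIncl V T)).obj V' :=
      le_antisymm hle1 hle2
    have h2 : (Subtype.val ⁻¹' (V'' : Set (TopCat.of V)) : Set T) =
        Subtype.val ⁻¹' (V' : Set (TopCat.of V)) := congrArg SetLike.coe heq
    rw [Subtype.preimage_coe_eq_preimage_coe_iff] at h2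
    show (V' : Set (TopCat.of V)) ∩ T = (V'' : Set (TopCat.of V)) ∩ T
    rw [Set.inter_comm, ← h2, Set.inter_comm]

theorem opensMap_isLocalization_tIso (V : Type u) [TopologicalSpace V] (T : Set V) :
    (Opens.map (subspaceIncl V T)).IsLocalization (TIso (TopCat.of V) T) := by
  rw [tIso_eq]
  exact (tAdj V T).isLocalization
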